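/- Let n ≥ 1 and m be natural numbers and c an integer. Then in the polynomial ring ℤ[t] one has ∑_{ϖ : {1,…,n} → S₃} ∑_{m₁=0}^{m} ∑_{m₂=0}^{m} δ₃( m₁ + 2m₂ + c + ∑_{p=1}^{n}(s₁(ϖ(p)) + 2s₂(ϖ(p))) ) · C(m,m₁)·C(m,m₂) · t^{2m−m₁−m₂} = 2·6^{n−1}·(t+1)^{2m}, where δ₃(N) = 1 if 3 divides N and δ₃(N) = 0 otherwise, and C(m,k) is the binomial coefficient. -/

import Mathlib

/-- `s₁(σ) = 1` if `σ(0) > σ(1)`, else `0`. -/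
def s₁ (σ : Equiv.Perm (Fin 3)) : ℕ := if σ 1 < σ 0 then 1 else 0

/-- `s₂(σ) = 1` if `σ(1) > σ(2)`, else `0`. -/
def s₂ (σ : Equiv.Perm (Fin 3)) : ℕ := if σ 2 < σ 1 then 1 else 0

/-- The residue `s₁(σ) + 2 s₂(σ)` mod 3. -/
def f3 (σ : Equiv.Perm (Fin 3)) : ZMod 3 := ((s₁ σ + 2 * s₂ σ : ℕ) : ZMod 3)

lemma count_f3 (r : ZMod 3) :
    (Finset.univ.filter (fun σ : Equiv.Perm (Fin 3) => f3 σ = r)).card = 2 := by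
  revert r; decide

open Polynomial Finset in
lemma key (k : ℕ) (r : ZMod 3) :
    ∑ ϖ : Fin (k+1) → Equiv.Perm (Fin 3),
      (if (∑ p, f3 (ϖ p)) = r then (1 : Polynomial ℤ) else 0) = 2 * 6 ^ k := by
  induction k generalizing r with
  | zero =>
    rw [Fintype.sum_equiv (Equiv.funUnique (Fin 1) (Equiv.Perm (Fin 3)))
      _ (fun σ => if f3 σ = r then (1 : Polynomial ℤ) else 0) (by intro ϖ; simp),
      Finset.sum_boole, count_f3]
    norm_num
  | succ k ih =>
    rw [Fintype.sum_equiv (Fin.consEquiv fun _ : Fin (k+2) => Equiv.Perm (Fin 3)).symm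
      _ (fun q : Equiv.Perm (Fin 3) × (Fin (k+1) → Equiv.Perm (Fin 3)) =>
          if f3 q.1 + ∑ i, f3 (q.2 i) = r then (1 : Polynomial ℤ) else 0)
      (by intro ϖ; simp [Fin.sum_univ_succ, Fin.tail, Fin.consEquiv]),
      Fintype.sum_prod_type]
    have : ∀ σ : Equiv.Perm (Fin 3),
        (∑ ϖ : Fin (k+1) → Equiv.Perm (Fin 3),
          if f3 σ + ∑ i, f3 (ϖ i) = r then (1 : Polynomial ℤ) else 0) = 2 * 6 ^ k := by
      intro σ
      rw [← ih (r - f3 σ)]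
      refine Finset.sum_congr rfl fun ϖ _ => ?_
      exact if_congr eq_sub_iff_add_eq'.symm rfl rfl
    simp only [this, Finset.sum_const, Finset.card_univ, Fintype.card_perm]
    norm_num [Nat.factorial]
    ring

open Polynomial Finset in
lemma binom_sum (m : ℕ) :
    ∑ k ∈ Finset.range (m + 1), (m.choose k : Polynomial ℤ) * X ^ (m - k)
      = (X + 1) ^ m := by
  rw [show (X + 1 : Polynomial ℤ) ^ m = (1 + X) ^ m by ring, add_pow]
  refine Finset.sum_congr rfl fun k hk => ?_
  ring

open Polynomial in
/-- For `n ≥ 1`, in `ℤ[t]`: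
`Σ_ϖ Σ_{m₁,m₂=0}^{m} δ₃(m₁+2m₂+c+Σ_p(s₁+2s₂))·C(m,m₁)C(m,m₂)·t^{2m-m₁-m₂}
  = 2·6^{n-1}·(t+1)^{2m}`. -/
theorem variant_cohomology_sum (n m : ℕ) (hn : 1 ≤ n) (c : ℤ) :
    ∑ ϖ : Fin n → Equiv.Perm (Fin 3),
      ∑ m₁ ∈ Finset.range (m + 1), ∑ m₂ ∈ Finset.range (m + 1),
        (if (3 : ℤ) ∣ ((m₁ : ℤ) + 2 * m₂ + c
            + ((∑ p : Fin n, (s₁ (ϖ p) + 2 * s₂ (ϖ p)) : ℕ) : ℤ))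
          then (1 : Polynomial ℤ) else 0)
          * (m.choose m₁ : Polynomial ℤ) * (m.choose m₂ : Polynomial ℤ)
          * X ^ (2 * m - m₁ - m₂)
    = 2 * 6 ^ (n - 1) * (X + 1) ^ (2 * m) := by
  obtain ⟨k, rfl⟩ : ∃ k, n = k + 1 := ⟨n - 1, by omega⟩
  simp only [Nat.add_sub_cancel]
  calc
    ∑ ϖ : Fin (k+1) → Equiv.Perm (Fin 3),
      ∑ m₁ ∈ Finset.range (m + 1), ∑ m₂ ∈ Finset.range (m + 1),
        (if (3 : ℤ) ∣ ((m₁ : ℤ) + 2 * m₂ + c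
            + ((∑ p : Fin (k+1), (s₁ (ϖ p) + 2 * s₂ (ϖ p)) : ℕ) : ℤ))
          then (1 : Polynomial ℤ) else 0)
          * (m.choose m₁ : Polynomial ℤ) * (m.choose m₂ : Polynomial ℤ)
          * X ^ (2 * m - m₁ - m₂)
      = ∑ m₁ ∈ Finset.range (m + 1), ∑ m₂ ∈ Finset.range (m + 1),
          (∑ ϖ : Fin (k+1) → Equiv.Perm (Fin 3),
            if (3 : ℤ) ∣ ((m₁ : ℤ) + 2 * m₂ + c
              + ((∑ p : Fin (k+1), (s₁ (ϖ p) + 2 * s₂ (ϖ p)) : ℕ) : ℤ))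
            then (1 : Polynomial ℤ) else 0)
          * ((m.choose m₁ : Polynomial ℤ) * (m.choose m₂ : Polynomial ℤ)
          * X ^ (2 * m - m₁ - m₂)) := by
        rw [Finset.sum_comm]
        refine Finset.sum_congr rfl fun m₁ _ => ?_
        rw [Finset.sum_comm]
        refine Finset.sum_congr rfl fun m₂ _ => ?_
        rw [Finset.sum_mul]
        exact Finset.sum_congr rfl fun ϖ _ => by ring
    _ = ∑ m₁ ∈ Finset.range (m + 1), ∑ m₂ ∈ Finset.range (m + 1),
          (2 * 6 ^ k : Polynomial ℤ)
          * ((m.choose m₁ : Polynomial ℤ) * (m.choose m₂ : Polynomial ℤ)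
          * X ^ (2 * m - m₁ - m₂)) := by
        refine Finset.sum_congr rfl fun m₁ _ => Finset.sum_congr rfl fun m₂ _ => ?_
        congr 1
        rw [← key k (-((m₁ : ZMod 3) + 2 * (m₂ : ZMod 3) + (c : ZMod 3)))]
        refine Finset.sum_congr rfl fun ϖ _ => ?_
        refine if_congr ?_ rfl rfl
        rw [show (3:ℤ) = ((3:ℕ):ℤ) from by norm_num,
          ← ZMod.intCast_zmod_eq_zero_iff_dvd]
        have hS : (∑ x : Fin (k+1), ((s₁ (ϖ x) : ZMod 3) + 2 * (s₂ (ϖ x) : ZMod 3)))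
            = ∑ p : Fin (k+1), f3 (ϖ p) := by
          refine Finset.sum_congr rfl fun p _ => ?_
          simp [f3]
        push_cast
        rw [hS]
        constructor
        · intro h; linear_combination h
        · intro h; linear_combination h
    _ = 2 * 6 ^ k * (X + 1) ^ (2 * m) := by
        simp only [← Finset.mul_sum]
        congr 1
        have : ∀ m₁ ∈ Finset.range (m + 1), ∀ m₂ ∈ Finset.range (m + 1),
            (m.choose m₁ : Polynomial ℤ) * (m.choose m₂ : Polynomial ℤ)
              * X ^ (2 * m - m₁ - m₂)
            = ((m.choose m₁ : Polynomial ℤ) * X ^ (m - m₁))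
              * ((m.choose m₂ : Polynomial ℤ) * X ^ (m - m₂)) := by
          intro m₁ h₁ m₂ h₂
          rw [Finset.mem_range] at h₁ h₂
          rw [show 2 * m - m₁ - m₂ = (m - m₁) + (m - m₂) by omega, pow_add]
          ring
        rw [Finset.sum_congr rfl fun m₁ h₁ => Finset.sum_congr rfl fun m₂ h₂ =>
          this m₁ h₁ m₂ h₂, ← Finset.sum_mul_sum, binom_sum, ← pow_add,
          show m + m = 2 * m by ring]
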